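/- If φ : (G,P) → (G',P') is a fibration of networks whose vertex map is surjective, then for any w' ∈ Ctrl(G',P'), the polydiagonal Δ_φ = {x ∈ PG : x_a = x_b whenever φ(a)=φ(b)} (the image of the embedding Pφ) is an invariant submanifold of the vector field I(φ*w') on PG. -/

import Mathlib

/-- A finite directed multigraph. -/
structure NetworkGraph where
  V : Type
  E : Type
  [fV : Fintype V]
  [fE : Fintype E]
  [dV : DecidableEq V]
  [dE : DecidableEq E]
  s : E → V
  t : E → V

attribute [instance] NetworkGraph.fV NetworkGraph.fE NetworkGraph.dV NetworkGraph.dE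

/-- A map of directed graphs. -/
@[ext]
structure GraphHom (G G' : NetworkGraph) where
  vmap : G.V → G'.V
  emap : G.E → G'.E
  src : ∀ e, vmap (G.s e) = G'.s (emap e)
  tgt : ∀ e, vmap (G.t e) = G'.t (emap e)

/-- Identity graph map. -/
def GraphHom.id (G : NetworkGraph) : GraphHom G G :=
  ⟨fun a => a, fun e => e, fun _ => rfl, fun _ => rfl⟩

/-- Composition of graph maps. -/
def GraphHom.comp {G G' G'' : NetworkGraph} (ψ : GraphHom G' G'') (φ : GraphHom G G') :
    GraphHom G G'' :=
  ⟨fun a => ψ.vmap (φ.vmap a), fun e => ψ.emap (φ.emap e),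
   fun e => (congrArg ψ.vmap (φ.src e)).trans (ψ.src _),
   fun e => (congrArg ψ.vmap (φ.tgt e)).trans (ψ.tgt _)⟩

/-- The map on total phase spaces induced by a graph map (`ℙφ`),
given a phase space function `P'` on the codomain graph; the phase space
function on the domain is `P' ∘ φ.vmap`. -/
def Pmap {G G' : NetworkGraph} (P' : G'.V → Type _) (φ : GraphHom G G') :
    (∀ a' : G'.V, P' a') → ∀ a : G.V, P' (φ.vmap a) :=
  fun x a => x (φ.vmap a)

/-- The input tree `I(a)` of a vertex `a`: vertices are `a` (the `Sum.inl` vertex)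
together with the edges of `G` targeting `a`; edges are the pairs `(a, γ)` with
`t γ = a`, going from `γ` to `a`. -/
@[reducible] def NetworkGraph.inputTree (G : NetworkGraph) (a : G.V) : NetworkGraph where
  V := Unit ⊕ {e : G.E // G.t e = a}
  E := {e : G.E // G.t e = a}
  s := fun e => Sum.inr e
  t := fun _ => Sum.inl ()

/-- The canonical graph map `ξ_a : I(a) → G`. -/
def NetworkGraph.xi (G : NetworkGraph) (a : G.V) : GraphHom (G.inputTree a) G where
  vmap := fun v => match v with
    | Sum.inl _ => a
    | Sum.inr e => G.s e.1
  emap := fun e => e.1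
  src := fun _ => rfl
  tgt := fun e => e.2.symm

/-- The graph with a single vertex and no edges. -/
def singleGraph : NetworkGraph where
  V := Unit
  E := Empty
  s := Empty.elim
  t := Empty.elim

/-- The inclusion `ι_a : {a} → G`. -/
def NetworkGraph.iota (G : NetworkGraph) (a : G.V) : GraphHom singleGraph G :=
  ⟨fun _ => a, Empty.elim, fun e => e.elim, fun e => e.elim⟩

/-- The inclusion `j_a : {a} → I(a)`. -/
def NetworkGraph.jmap (G : NetworkGraph) (a : G.V) : GraphHom singleGraph (G.inputTree a) :=
  ⟨fun _ => Sum.inl (), Empty.elim, fun e => e.elim, fun e => e.elim⟩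

/-- The induced map of input trees `φ_a : I(a) → I(φ(a))`. -/
def GraphHom.inputHom {G G' : NetworkGraph} (φ : GraphHom G G') (a : G.V) :
    GraphHom (G.inputTree a) (G'.inputTree (φ.vmap a)) where
  vmap := fun v => match v with
    | Sum.inl _ => Sum.inl ()
    | Sum.inr e => Sum.inr ⟨φ.emap e.1, by rw [← φ.tgt, e.2]⟩
  emap := fun e => ⟨φ.emap e.1, by rw [← φ.tgt, e.2]⟩
  src := fun _ => rfl
  tgt := fun _ => rfl

/-- A graph fibration: for every vertex `a` of `G` and every edge `e'` of `G'`
ending at `φ(a)` there is a unique edge `e` of `G` ending at `a` with `φ(e) = e'`. -/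
def IsFibration {G G' : NetworkGraph} (φ : GraphHom G G') : Prop :=
  ∀ (a : G.V) (e' : G'.E), G'.t e' = φ.vmap a →
    ∃! e : G.E, G.t e = a ∧ φ.emap e = e'

/-- For a graph fibration, the inverse of the bijection `t⁻¹(a) → t⁻¹(φ(a))`. -/
noncomputable def fibSection {G G' : NetworkGraph} {φ : GraphHom G G'} (hφ : IsFibration φ)
    (a : G.V) (e' : {e' : G'.E // G'.t e' = φ.vmap a}) : {e : G.E // G.t e = a} :=
  ⟨(hφ a e'.1 e'.2).exists.choose, (hφ a e'.1 e'.2).exists.choose_spec.1⟩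

theorem fibSection_spec {G G' : NetworkGraph} {φ : GraphHom G G'} (hφ : IsFibration φ)
    (a : G.V) (e' : {e' : G'.E // G'.t e' = φ.vmap a}) :
    φ.emap (fibSection hφ a e').1 = e'.1 :=
  (hφ a e'.1 e'.2).exists.choose_spec.2

/-- The pullback of a tuple of open systems along a graph fibration:
`(φ*w')_a = w'_{φ(a)} ∘ (ℙφ_a)⁻¹`, written out explicitly using the inverse of the
input tree isomorphism `φ_a : I(a) ≅ I(φ(a))`. -/
noncomputable def pullbackCtrl {G G' : NetworkGraph} {φ : GraphHom G G'} (hφ : IsFibration φ)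
    (M' : G'.V → Type _) (E' : G'.V → Type _)
    (w' : ∀ a' : G'.V, (∀ v : (G'.inputTree a').V, M' ((G'.xi a').vmap v)) → E' a')
    (a : G.V) (y : ∀ v : (G.inputTree a).V, M' (φ.vmap ((G.xi a).vmap v))) :
    E' (φ.vmap a) :=
  w' (φ.vmap a) (fun v => match v with
    | Sum.inl _ => y (Sum.inl ())
    | Sum.inr e' =>
        cast (congrArg M' ((φ.src _).trans (congrArg G'.s (fibSection_spec hφ a e'))))
          (y (Sum.inr (fibSection hφ a e'))))

open Manifold Topology

section Aux

theorem cast_app' {α : Type*} {M : α → Type*} {i j : α} (h : i = j) (x : ∀ a, M a) :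
    cast (congrArg M h) (x i) = x j := by subst h; rfl

theorem continuous_cast_app {α : Type*} {M : α → Type*} [∀ a, TopologicalSpace (M a)]
    {i j : α} (h : i = j) : Continuous (cast (congrArg M h)) := by
  subst h; exact continuous_id

theorem hasMFDerivAt_reindex {ι κ : Type} [Fintype ι] [Fintype κ] (σ : ι → κ)
    {E : κ → Type} [∀ k, NormedAddCommGroup (E k)] [∀ k, NormedSpace ℝ (E k)]
    {H : κ → Type} [∀ k, TopologicalSpace (H k)] (I : ∀ k, ModelWithCorners ℝ (E k) (H k))
    (M : κ → Type) [∀ k, TopologicalSpace (M k)] [∀ k, ChartedSpace (H k) (M k)]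
    (x : ∀ k, M k) :
    HasMFDerivAt (ModelWithCorners.pi I) (ModelWithCorners.pi fun i => I (σ i))
      (fun x i => x (σ i)) x
      (ContinuousLinearMap.pi fun i => ContinuousLinearMap.proj (σ i)) := by
  constructor
  · exact (continuous_pi fun i => continuous_apply (σ i)).continuousAt
  · set L : (∀ k, E k) →L[ℝ] ∀ i, E (σ i) :=
      ContinuousLinearMap.pi fun i => ContinuousLinearMap.proj (σ i) with hL
    set S : Set (∀ k, E k) := Set.pi Set.univ fun k => (extChartAt (I k) (x k)).target with hSdef
    have hwr : ∀ u ∈ S, writtenInExtChartAt (ModelWithCorners.pi I)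
        (ModelWithCorners.pi fun i => I (σ i)) x (fun x i => x (σ i)) u = L u := by
      intro u hu
      funext i
      show extChartAt (I (σ i)) (x (σ i)) ((extChartAt (I (σ i)) (x (σ i))).symm (u (σ i))) = u (σ i)
      exact (extChartAt (I (σ i)) (x (σ i))).right_inv (hu (σ i) (Set.mem_univ _))
    have hpmem : (extChartAt (ModelWithCorners.pi I) x) x ∈ S := by
      intro k _
      exact mem_extChartAt_target (x k)
    have hrange : Set.range (⇑(ModelWithCorners.pi I))
        = Set.pi Set.univ fun k => Set.range (I k) := by
      ext u
      constructor
      · rintro ⟨v, rfl⟩ a _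
        exact Set.mem_range_self _
      · intro hu
        exact ⟨fun a => Classical.choose (hu a (Set.mem_univ a)),
          funext fun a => Classical.choose_spec (hu a (Set.mem_univ a))⟩
    have hS : S ∈ 𝓝[Set.range (⇑(ModelWithCorners.pi I))]
        ((extChartAt (ModelWithCorners.pi I) x) x) := by
      rw [hrange, nhdsWithin_pi_univ_eq]
      exact Filter.pi_mem_pi Set.finite_univ fun k _ => extChartAt_target_mem_nhdsWithin (x k)
    exact L.hasFDerivWithinAt.congr_of_eventuallyEq
      (Filter.eventuallyEq_of_mem hS hwr) (hwr _ hpmem)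

end Aux


/-- If `φ : (G,P) → (G',P')` is a fibration of networks whose vertex map is
surjective, then for any tuple `w' ∈ Ctrl(G',P')` of (smooth) open systems, the
polydiagonal `Δ_φ = {x ∈ ℙG : x_a = x_b whenever φ(a) = φ(b)}` — the image of the
embedding `ℙφ` — is an invariant submanifold of the vector field `𝓘(φ*w')` on `ℙG`:
`ℙφ` is an embedding with range `Δ_φ` and `D(ℙφ) ∘ 𝓘'(w') = 𝓘(φ*w') ∘ ℙφ`. -/
theorem polydiagonal_invariant {G G' : NetworkGraph} (φ : GraphHom G G')
    (hφ : IsFibration φ) (hsurj : Function.Surjective φ.vmap)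
    (E' : G'.V → Type) [∀ a', NormedAddCommGroup (E' a')] [∀ a', NormedSpace ℝ (E' a')]
    (H' : G'.V → Type) [∀ a', TopologicalSpace (H' a')]
    (I' : ∀ a', ModelWithCorners ℝ (E' a') (H' a'))
    (M' : G'.V → Type) [∀ a', TopologicalSpace (M' a')] [∀ a', ChartedSpace (H' a') (M' a')]
    [∀ a', IsManifold (I' a') (⊤ : ℕ∞) (M' a')]
    (w' : ∀ a' : G'.V, (∀ v : (G'.inputTree a').V, M' ((G'.xi a').vmap v)) → E' a')
    (hw' : ∀ a' : G'.V, ContMDiff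
        (ModelWithCorners.pi fun v : (G'.inputTree a').V => I' ((G'.xi a').vmap v))
        (I' a').tangent (⊤ : ℕ∞)
        (fun y => (⟨y (Sum.inl ()), w' a' y⟩ : TangentBundle (I' a') (M' a')))) :
    -- `ℙφ` is an embedding with image the polydiagonal `Δ_φ` ...
    IsEmbedding (Pmap M' φ) ∧
    Set.range (Pmap M' φ) =
      {x : ∀ a : G.V, M' (φ.vmap a) | ∀ a b : G.V, φ.vmap a = φ.vmap b → HEq (x a) (x b)} ∧
    -- ... and the vector field `𝓘(φ*w')` is tangent to it:
    -- `D(ℙφ) ∘ 𝓘'(w') = 𝓘(φ*w') ∘ ℙφ`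
    ∀ x' : ∀ a' : G'.V, M' a',
      mfderiv (ModelWithCorners.pi I') (ModelWithCorners.pi fun a => I' (φ.vmap a))
          (Pmap M' φ) x' (fun a' => w' a' (Pmap M' (G'.xi a') x')) =
        fun a : G.V => pullbackCtrl hφ M' E' w' a
          (Pmap (fun b => M' (φ.vmap b)) (G.xi a) (Pmap M' φ x')) := by
  refine ⟨?_, ?_, ?_⟩
  · -- embedding
    have hg : Continuous (fun (y : ∀ a : G.V, M' (φ.vmap a)) (a' : G'.V) =>
        cast (congrArg M' (hsurj a').choose_spec) (y (hsurj a').choose)) :=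
      continuous_pi fun a' =>
        (continuous_cast_app (hsurj a').choose_spec).comp (continuous_apply (hsurj a').choose)
    refine Function.LeftInverse.isEmbedding (f := fun (y : ∀ a : G.V, M' (φ.vmap a)) (a' : G'.V) =>
        cast (congrArg M' (hsurj a').choose_spec) (y (hsurj a').choose)) ?_ hg
        (continuous_pi fun a => continuous_apply (φ.vmap a))
    intro x
    funext a'
    exact cast_app' (hsurj a').choose_spec x
  · -- range
    ext x
    constructor
    · rintro ⟨x', rfl⟩ a b hab
      show HEq (x' (φ.vmap a)) (x' (φ.vmap b))
      rw [hab]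
    · intro hx
      refine ⟨fun a' => cast (congrArg M' (hsurj a').choose_spec) (x (hsurj a').choose), ?_⟩
      funext a
      exact cast_eq_iff_heq.mpr (hx _ _ (hsurj (φ.vmap a)).choose_spec)
  · -- invariance
    intro x'
    have key : HasMFDerivAt (ModelWithCorners.pi I')
        (ModelWithCorners.pi fun a => I' (φ.vmap a)) (Pmap M' φ) x'
        (ContinuousLinearMap.pi fun a => ContinuousLinearMap.proj (φ.vmap a)) :=
      hasMFDerivAt_reindex φ.vmap I' M' x'
    have keym : mfderiv (ModelWithCorners.pi I')
        (ModelWithCorners.pi fun a => I' (φ.vmap a)) (Pmap M' φ) x'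
        = ContinuousLinearMap.pi fun a => ContinuousLinearMap.proj (φ.vmap a) :=
      key.mfderiv
    rw [keym]
    funext a
    show w' (φ.vmap a) (Pmap M' (G'.xi (φ.vmap a)) x') = _
    unfold pullbackCtrl
    congr 1
    funext v
    match v with
    | Sum.inl () => rfl
    | Sum.inr e' =>
      show x' (G'.s e'.1) = cast _ (x' (φ.vmap (G.s (fibSection hφ a e').1)))
      exact (cast_app' ((φ.src _).trans (congrArg G'.s (fibSection_spec hφ a e'))) x').symm
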